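/- Suppose {P_i : 0 ≤ i ≤ d−1} are d×d matrices of the form P_i = (1/(d√(d+1))) Σ_{r,s ∈ ℤ_d} p_i^{(r,s)} W_{(r,s)} + κ·I with κ = (√(d+1)−1)/(d√(d+1)), where the complex coefficients satisfy: p_i^{(0,0)} = 1 for all i, conj(p_i^{(r,s)}) = p_i^{(−r,−s)}, and Σ_{i=0}^{d−1} |p_i^{(r,s)}|² = d for all (r,s). Then (1/d³) Σ_{i,k,l ∈ ℤ_d} (W_{(k,l)} P_i W_{(k,l)}^{-1}) ⊗ (W_{(k,l)} P_i W_{(k,l)}^{-1}) = (2/(d(d+1)))·Π_sym, where Π_sym = (1/2)(I⊗I + SWAP) is the projection onto the symmetric subspace of ℂ^d ⊗ ℂ^d. -/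

import Mathlib

open Matrix Complex BigOperators
open scoped Kronecker

noncomputable def tauC (d : ℕ) : ℂ := - Complex.exp (Real.pi * Complex.I / d)


/-- `U = diag(e^{2πik/d})`. -/
noncomputable def Umat (d : ℕ) [NeZero d] : Matrix (ZMod d) (ZMod d) ℂ :=
  Matrix.diagonal fun k => Complex.exp (2 * Real.pi * Complex.I * k.val / d)

/-- `V` the cyclic shift: `V e_r = e_{r+1}`. -/
def Vmat (d : ℕ) [NeZero d] : Matrix (ZMod d) (ZMod d) ℂ :=
  fun i j => if i = j + 1 then 1 else 0

/-- Weyl–Heisenberg matrices `W_{(r,s)} = τ^{rs} V^r U^s`. -/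
noncomputable def WH (d : ℕ) [NeZero d] (r s : ZMod d) : Matrix (ZMod d) (ZMod d) ℂ :=
  (tauC d) ^ (r.val * s.val) • ((Vmat d) ^ r.val * (Umat d) ^ s.val)

/-- The SWAP operator on `ℂ^d ⊗ ℂ^d`. -/
def SWAPmat (d : ℕ) [NeZero d] : Matrix (ZMod d × ZMod d) (ZMod d × ZMod d) ℂ :=
  fun p q => if p.1 = q.2 ∧ p.2 = q.1 then 1 else 0

noncomputable def zC (d : ℕ) : ℂ := Complex.exp (2 * Real.pi * Complex.I / d)

noncomputable def ch (d : ℕ) [NeZero d] (m : ZMod d) : ℂ := tauC d ^ m.val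

lemma exp_pow (z : ℂ) (n : ℕ) : Complex.exp z ^ n = Complex.exp (n * z) :=
  (Complex.exp_nat_mul z n).symm

lemma pow_mod_of_pow_eq_one {x : ℂ} {d : ℕ} (h : x ^ d = 1) (n : ℕ) :
    x ^ n = x ^ (n % d) := by
  conv_lhs => rw [← Nat.div_add_mod n d]
  rw [pow_add, pow_mul, h, one_pow, one_mul]

section
variable (d : ℕ) [NeZero d]

lemma dC_ne : (d : ℂ) ≠ 0 := Nat.cast_ne_zero.2 (NeZero.ne d)

lemma tau_pow_d (hd : Odd d) : tauC d ^ d = 1 := by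
  unfold tauC
  rw [neg_pow, exp_pow, mul_div_assoc', mul_div_cancel_left₀ _ (dC_ne d),
    Complex.exp_pi_mul_I, hd.neg_one_pow]
  ring

lemma zC_pow_d : zC d ^ d = 1 := by
  unfold zC
  rw [exp_pow, mul_div_assoc', mul_div_cancel_left₀ _ (dC_ne d),
    Complex.exp_two_pi_mul_I]

lemma ch_zero : ch d 0 = 1 := by simp [ch]

lemma ch_add (hd : Odd d) (a b : ZMod d) : ch d (a + b) = ch d a * ch d b := by
  unfold ch
  rw [← pow_add, ZMod.val_add, ← pow_mod_of_pow_eq_one (tau_pow_d d hd)]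

lemma ch_sq (m : ZMod d) : ch d m ^ 2 = zC d ^ m.val := by
  unfold ch tauC zC
  rw [← pow_mul, mul_comm m.val 2, pow_mul, neg_sq, exp_pow]
  congr 2
  push_cast
  ring

lemma zC_pow_ne_one {v : ℕ} (h0 : 0 < v) (hv : v < d) : zC d ^ v ≠ 1 := by
  unfold zC
  rw [exp_pow, Ne, Complex.exp_eq_one_iff]
  rintro ⟨n, hn⟩
  have hd0 : (d : ℂ) ≠ 0 := dC_ne d
  have hπ : (Real.pi : ℂ) ≠ 0 := by simpa using Real.pi_ne_zero
  have h2 : ((2:ℂ) * Real.pi * Complex.I) ≠ 0 := by simp [hπ, Complex.I_ne_zero]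
  have hvd : (v : ℂ) = n * d := by
    field_simp at hn
    linear_combination hn
  have hz : (v : ℤ) = n * d := by exact_mod_cast hvd
  have hdvd : (d : ℕ) ∣ v := by
    have : (d : ℤ) ∣ (v : ℤ) := ⟨n, by linarith⟩
    exact_mod_cast this
  exact Nat.not_dvd_of_pos_of_lt h0 hv hdvd

/-- the additive character `m ↦ e^{2πi m/d}` as `zC^val`. -/
noncomputable def eC (m : ZMod d) : ℂ := zC d ^ m.val

lemma eC_zero : eC d 0 = 1 := by simp [eC]

lemma eC_add (a b : ZMod d) : eC d (a + b) = eC d a * eC d b := by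
  unfold eC
  rw [← pow_add, ZMod.val_add, ← pow_mod_of_pow_eq_one (zC_pow_d d)]

lemma eC_eq_ch_sq (m : ZMod d) : ch d m ^ 2 = eC d m := ch_sq d m

lemma eC_mul_left (k m : ZMod d) : eC d (k * m) = (eC d m) ^ k.val := by
  unfold eC
  rw [← pow_mul, ZMod.val_mul, ← pow_mod_of_pow_eq_one (zC_pow_d d), mul_comm]

lemma sum_val_eq_range (f : ℕ → ℂ) :
    ∑ k : ZMod d, f k.val = ∑ j ∈ Finset.range d, f j := by
  refine Finset.sum_nbij' (fun k => k.val) (fun j => (j : ZMod d)) ?_ ?_ ?_ ?_ ?_ <;>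
    intros <;>
    simp_all [ZMod.val_lt, ZMod.val_cast_of_lt, Finset.mem_range, ZMod.natCast_val, Nat.mod_eq_of_lt]

lemma char_sum (m : ZMod d) :
    ∑ k : ZMod d, eC d (k * m) = if m = 0 then (d : ℂ) else 0 := by
  split_ifs with h
  · subst h
    simp [eC_zero, Finset.card_univ]
  · have hv0 : 0 < m.val := Nat.pos_of_ne_zero (fun h0 => h ((ZMod.val_eq_zero m).mp h0))
    have hvd : m.val < d := ZMod.val_lt m
    have hne : eC d m ≠ 1 := zC_pow_ne_one d hv0 hvd
    have hone : eC d m ^ d = 1 := by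
      unfold eC
      rw [← pow_mul, mul_comm, pow_mul, zC_pow_d d, one_pow]
    calc ∑ k : ZMod d, eC d (k * m) = ∑ k : ZMod d, (eC d m) ^ k.val := by
          simp [eC_mul_left]
      _ = ∑ j ∈ Finset.range d, (eC d m) ^ j := sum_val_eq_range d _
      _ = ((eC d m) ^ d - 1) / (eC d m - 1) := geom_sum_eq hne d
      _ = 0 := by rw [hone, sub_self, zero_div]


lemma zC_pow_eval (v : ℕ) : zC d ^ v = Complex.exp (2 * Real.pi * Complex.I * v / d) := by
  unfold zC
  rw [exp_pow]
  congr 1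
  push_cast
  ring

lemma tau_val_mul (hd : Odd d) (r s : ZMod d) :
    tauC d ^ (r.val * s.val) = ch d (r * s) := by
  unfold ch
  rw [ZMod.val_mul, ← pow_mod_of_pow_eq_one (tau_pow_d d hd)]

lemma zC_val_mul (j s : ZMod d) : zC d ^ (j.val * s.val) = eC d (j * s) := by
  unfold eC
  rw [ZMod.val_mul, ← pow_mod_of_pow_eq_one (zC_pow_d d)]

lemma Vpow_apply (n : ℕ) (i j : ZMod d) :
    (Vmat d ^ n) i j = if i = j + (n : ZMod d) then 1 else 0 := by
  induction n generalizing j with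
  | zero => simp [Matrix.one_apply]
  | succ n ih =>
    rw [pow_succ, Matrix.mul_apply]
    simp only [Vmat, mul_ite, mul_one, mul_zero]
    rw [Finset.sum_ite_eq' Finset.univ (j + 1) fun m => (Vmat d ^ n) i m]
    simp only [Finset.mem_univ, if_true, ih]
    congr 1
    push_cast
    rw [eq_iff_iff]
    constructor <;> intro h <;> [skip; skip] <;> rw [h] <;> ring

lemma WH_apply (hd : Odd d) (r s i j : ZMod d) :
    WH d r s i j = if i = j + r then ch d (r * s) * eC d (j * s) else 0 := by
  unfold WH Umat
  rw [Matrix.diagonal_pow, Matrix.smul_apply, Matrix.mul_diagonal, Vpow_apply,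
    ZMod.natCast_val, ZMod.cast_id]
  simp only [Pi.pow_apply, ← zC_pow_eval d, ← pow_mul, zC_val_mul, tau_val_mul d hd,
    smul_eq_mul]
  split_ifs <;> ring


lemma eC_eq' (hd : Odd d) (x : ZMod d) : eC d x = ch d (x + x) := by
  rw [ch_add d hd, ← sq, eC_eq_ch_sq]

lemma WH_zero_zero : WH d 0 0 = 1 := by
  simp [WH]

lemma WH_mul (hd : Odd d) (k l r s : ZMod d) :
    WH d k l * WH d r s = ch d (r * l - k * s) • WH d (k + r) (l + s) := by
  ext i j
  rw [Matrix.mul_apply, Matrix.smul_apply]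
  simp only [WH_apply d hd, ite_mul, zero_mul, mul_ite, mul_zero, smul_eq_mul]
  rw [Finset.sum_eq_single (j + r)]
  · rw [if_pos rfl]
    have hiff : (i = j + r + k) = (i = j + (k + r)) := by
      rw [eq_iff_iff]
      constructor <;> intro h <;> rw [h] <;> ring
    simp only [hiff]
    split_ifs with h
    · simp only [eC_eq' d hd]
      simp only [mul_assoc, ← ch_add d hd]
      congr 1
      ring
    · rfl
  · intro m _ hm
    rw [if_neg hm]
  · intro h
    exact absurd (Finset.mem_univ _) h


lemma WH_mul_inv (hd : Odd d) (k l : ZMod d) : WH d k l * WH d (-k) (-l) = 1 := by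
  rw [WH_mul d hd]
  have h1 : (-k) * l - k * (-l) = 0 := by ring
  have h2 : k + -k = (0 : ZMod d) := by ring
  have h3 : l + -l = (0 : ZMod d) := by ring
  rw [h1, h2, h3, ch_zero, WH_zero_zero, one_smul]

lemma WH_inv (hd : Odd d) (k l : ZMod d) : (WH d k l)⁻¹ = WH d (-k) (-l) :=
  Matrix.inv_eq_right_inv (WH_mul_inv d hd k l)

lemma WH_conj (hd : Odd d) (k l r s : ZMod d) :
    WH d k l * WH d r s * (WH d k l)⁻¹ = eC d (r * l - k * s) • WH d r s := by
  rw [WH_inv d hd, WH_mul d hd, Matrix.smul_mul, WH_mul d hd, smul_smul]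
  have h2 : k + r + -k = r := by ring
  have h3 : l + s + -l = s := by ring
  rw [h2, h3, ← ch_add d hd, eC_eq' d hd]
  congr 2
  ring

lemma sum_WH_kron (hd : Odd d) :
    ∑ r : ZMod d, ∑ s : ZMod d, (WH d r s ⊗ₖ WH d (-r) (-s)) = (d : ℂ) • SWAPmat d := by
  ext ⟨i, i'⟩ ⟨j, j'⟩
  simp only [Matrix.sum_apply, Matrix.kroneckerMap_apply, WH_apply d hd, Matrix.smul_apply,
    SWAPmat, smul_eq_mul, ite_mul, zero_mul, mul_ite, mul_zero]
  rw [Finset.sum_eq_single (i - j)]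
  · by_cases hc : i' = j' + -(i - j)
    · have hmain : ∀ s : ZMod d, s ∈ Finset.univ →
          (if i' = j' + -(i - j) then
            if i = j + (i - j) then
              ch d ((i - j) * s) * eC d (j * s) * (ch d (-(i - j) * -s) * eC d (j' * -s))
            else 0
          else 0) = eC d (s * (i - j')) := by
        intro s _
        rw [if_pos hc, if_pos (show i = j + (i - j) by ring)]
        have h1 : -(i - j) * -s = (i - j) * s := by ring
        rw [h1]
        simp only [eC_eq' d hd]
        simp only [mul_assoc, ← ch_add d hd]
        congr 1
        ring
      rw [Finset.sum_congr rfl hmain, char_sum]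
      by_cases hij : i = j'
      · have hji : i' = j := by rw [hc, hij]; ring
        rw [if_pos (show i - j' = 0 by rw [hij]; ring), if_pos ⟨hij, hji⟩, mul_one]
      · rw [if_neg (fun hh => hij (by rwa [sub_eq_zero] at hh)),
          if_neg (fun hh => hij hh.1)]
    · rw [Finset.sum_eq_zero (fun s _ => if_neg hc), if_neg]
      rintro ⟨h1, h2⟩
      exact hc (by rw [h2, h1]; ring)
  · intro r _ hr
    apply Finset.sum_eq_zero
    intro s _
    by_cases h2 : i' = j' + -r
    · rw [if_pos h2, if_neg (fun hh => hr (by rw [hh]; ring))]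
    · rw [if_neg h2]
  · intro h
    exact absurd (Finset.mem_univ _) h


lemma kron_sum_left {ι : Type*} (t : Finset ι) (f : ι → Matrix (ZMod d) (ZMod d) ℂ)
    (B : Matrix (ZMod d) (ZMod d) ℂ) :
    (∑ x ∈ t, f x) ⊗ₖ B = ∑ x ∈ t, (f x ⊗ₖ B) := by
  ext ⟨i, i'⟩ ⟨j, j'⟩
  simp [Matrix.kroneckerMap_apply, Matrix.sum_apply, Finset.sum_mul]

lemma kron_sum_right {ι : Type*} (t : Finset ι) (f : ι → Matrix (ZMod d) (ZMod d) ℂ)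
    (B : Matrix (ZMod d) (ZMod d) ℂ) :
    B ⊗ₖ (∑ x ∈ t, f x) = ∑ x ∈ t, (B ⊗ₖ f x) := by
  ext ⟨i, i'⟩ ⟨j, j'⟩
  simp [Matrix.kroneckerMap_apply, Matrix.sum_apply, Finset.mul_sum]

lemma sum_swap2 {M : Type*} [AddCommMonoid M] (G : ZMod d → ZMod d → M) :
    ∑ x : ZMod d, ∑ y : ZMod d, G x y = ∑ y : ZMod d, ∑ x : ZMod d, G x y :=
  Finset.sum_comm

lemma sum_swap3 {M : Type*} [AddCommMonoid M] (G : ZMod d → ZMod d → ZMod d → M) :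
    ∑ x : ZMod d, ∑ y : ZMod d, ∑ z : ZMod d, G x y z
      = ∑ y : ZMod d, ∑ z : ZMod d, ∑ x : ZMod d, G x y z :=
  (Finset.sum_comm).trans (Finset.sum_congr rfl fun _ _ => Finset.sum_comm)

lemma sum_swap4 {M : Type*} [AddCommMonoid M] (G : ZMod d → ZMod d → ZMod d → ZMod d → M) :
    ∑ x : ZMod d, ∑ y : ZMod d, ∑ z : ZMod d, ∑ w : ZMod d, G x y z w
      = ∑ y : ZMod d, ∑ z : ZMod d, ∑ w : ZMod d, ∑ x : ZMod d, G x y z w :=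
  (Finset.sum_comm).trans (Finset.sum_congr rfl fun y _ => sum_swap3 d (G · y))

lemma sum_swap5 {M : Type*} [AddCommMonoid M]
    (G : ZMod d → ZMod d → ZMod d → ZMod d → ZMod d → M) :
    ∑ x : ZMod d, ∑ y : ZMod d, ∑ z : ZMod d, ∑ w : ZMod d, ∑ v : ZMod d, G x y z w v
      = ∑ y : ZMod d, ∑ z : ZMod d, ∑ w : ZMod d, ∑ v : ZMod d, ∑ x : ZMod d, G x y z w v :=
  (Finset.sum_comm).trans (Finset.sum_congr rfl fun y _ => sum_swap4 d (G · y))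

lemma sum_swap6 {M : Type*} [AddCommMonoid M]
    (F : ZMod d → ZMod d → ZMod d → ZMod d → ZMod d → ZMod d → M) :
    ∑ k : ZMod d, ∑ l : ZMod d, ∑ r : ZMod d, ∑ s : ZMod d, ∑ r' : ZMod d, ∑ s' : ZMod d,
        F k l r s r' s'
      = ∑ r : ZMod d, ∑ s : ZMod d, ∑ r' : ZMod d, ∑ s' : ZMod d, ∑ k : ZMod d, ∑ l : ZMod d,
        F k l r s r' s' :=
  (Finset.sum_congr rfl fun k _ => sum_swap5 d (F k)).trans
    (sum_swap5 d (fun k r s r' s' => ∑ l : ZMod d, F k l r s r' s'))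


lemma sum_WH_kron' (hd : Odd d) :
    ∑ r : ZMod d, ∑ s : ZMod d, (WH d (-r) (-s) ⊗ₖ WH d r s) = (d : ℂ) • SWAPmat d := by
  rw [← sum_WH_kron d hd]
  refine Fintype.sum_equiv (Equiv.neg (ZMod d)) _ _ fun r => ?_
  refine Fintype.sum_equiv (Equiv.neg (ZMod d)) _ _ fun s => ?_
  simp only [Equiv.neg_apply, neg_neg]

end

theorem two_design_from_coeffs (d : ℕ) [NeZero d] (hd : Odd d)
    (P : ZMod d → Matrix (ZMod d) (ZMod d) ℂ)
    (p : ZMod d → ZMod d → ZMod d → ℂ)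
    (hP : ∀ i, P i =
      (1 / (d * Real.sqrt (d + 1)) : ℂ) • ∑ r : ZMod d, ∑ s : ZMod d, p i r s • WH d r s +
        ((Real.sqrt (d + 1) - 1) / (d * Real.sqrt (d + 1)) : ℂ) •
          (1 : Matrix (ZMod d) (ZMod d) ℂ))
    (h0 : ∀ i, p i 0 0 = 1)
    (hconj : ∀ i r s, starRingEnd ℂ (p i r s) = p i (-r) (-s))
    (hnorm : ∀ r s : ZMod d, ∑ i : ZMod d, ‖p i r s‖ ^ 2 = d) :
    (1 / (d : ℂ) ^ 3) • ∑ i : ZMod d, ∑ k : ZMod d, ∑ l : ZMod d,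
        (WH d k l * P i * (WH d k l)⁻¹) ⊗ₖ (WH d k l * P i * (WH d k l)⁻¹) =
      (2 / (d * (d + 1)) : ℂ) •
        ((1 / 2 : ℂ) • ((1 : Matrix (ZMod d) (ZMod d) ℂ) ⊗ₖ (1 : Matrix (ZMod d) (ZMod d) ℂ)
          + SWAPmat d)) := by
  classical
  have hdC : (d : ℂ) ≠ 0 := dC_ne d
  set t : ℂ := ((Real.sqrt ((d : ℝ) + 1) : ℝ) : ℂ) with ht
  have hd1 : (0 : ℝ) ≤ (d : ℝ) + 1 := by positivity
  have hsq : t ^ 2 = (d : ℂ) + 1 := by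
    rw [ht, ← Complex.ofReal_pow, Real.sq_sqrt hd1]
    push_cast
    ring
  have hd1C : (d : ℂ) + 1 ≠ 0 := by
    have h1 : ((d + 1 : ℕ) : ℂ) ≠ 0 := Nat.cast_ne_zero.2 (by omega)
    push_cast at h1
    exact h1
  have htne : t ≠ 0 := by
    intro h
    apply hd1C
    rw [← hsq, h]
    ring
  set a : ℂ := 1 / (d * t) with ha
  set κ : ℂ := (t - 1) / (d * t) with hκ
  set c : ZMod d → ZMod d → ZMod d → ℂ :=
    fun i r s => a * p i r s + if r = 0 ∧ s = 0 then κ else 0 with hc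
  -- Step 1: single-sum form of P i
  have key : ∀ i, P i = ∑ r : ZMod d, ∑ s : ZMod d, c i r s • WH d r s := by
    intro i
    rw [hP i]
    have hsplit : ∑ r : ZMod d, ∑ s : ZMod d, c i r s • WH d r s
        = (∑ r : ZMod d, ∑ s : ZMod d, (a * p i r s) • WH d r s)
          + ∑ r : ZMod d, ∑ s : ZMod d, (if r = 0 ∧ s = 0 then κ else 0) • WH d r s := by
      rw [← Finset.sum_add_distrib]
      refine Finset.sum_congr rfl fun r _ => ?_
      rw [← Finset.sum_add_distrib]
      refine Finset.sum_congr rfl fun s _ => ?_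
      simp only [hc]
      rw [← add_smul]
    rw [hsplit]
    congr 1
    · rw [Finset.smul_sum]
      refine Finset.sum_congr rfl fun r _ => ?_
      rw [Finset.smul_sum]
      refine Finset.sum_congr rfl fun s _ => ?_
      rw [smul_smul]
    · rw [Finset.sum_eq_single (0 : ZMod d)]
      · rw [Finset.sum_eq_single (0 : ZMod d)]
        · rw [if_pos ⟨rfl, rfl⟩, WH_zero_zero]
        · intro s _ hs
          rw [if_neg (fun h => hs h.2), zero_smul]
        · exact fun h => absurd (Finset.mem_univ _) h
      · intro r _ hr
        apply Finset.sum_eq_zero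
        intro s _
        rw [if_neg (fun h => hr h.1), zero_smul]
      · exact fun h => absurd (Finset.mem_univ _) h
  -- Step 2: conjugation
  have conjP : ∀ i k l, WH d k l * P i * (WH d k l)⁻¹
      = ∑ r : ZMod d, ∑ s : ZMod d, (c i r s * eC d (r * l - k * s)) • WH d r s := by
    intro i k l
    rw [key i]
    simp only [Matrix.mul_sum, Matrix.sum_mul, Matrix.mul_smul, Matrix.smul_mul,
      WH_conj d hd, smul_smul]
  -- Step 3: per-i average over (k,l)
  have step : ∀ i, (∑ k : ZMod d, ∑ l : ZMod d,
      (WH d k l * P i * (WH d k l)⁻¹) ⊗ₖ (WH d k l * P i * (WH d k l)⁻¹))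
      = ∑ r : ZMod d, ∑ s : ZMod d,
          (((d : ℂ) * d) * (c i r s * c i (-r) (-s))) • (WH d (-r) (-s) ⊗ₖ WH d r s) := by
    intro i
    simp only [conjP i]
    simp only [kron_sum_left, kron_sum_right, smul_kronecker, kronecker_smul,
      Finset.smul_sum, smul_smul]
    rw [sum_swap6 d]
    refine Finset.sum_congr rfl fun r _ => Finset.sum_congr rfl fun s _ => ?_
    have inner : ∀ r' s' : ZMod d,
        (∑ k : ZMod d, ∑ l : ZMod d,
          (c i r s * eC d (r * l - k * s) * (c i r' s' * eC d (r' * l - k * s'))) •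
            (WH d r' s' ⊗ₖ WH d r s))
        = (if r' = -r ∧ s' = -s then ((d : ℂ) * d) * (c i r s * c i r' s') else 0) •
            (WH d r' s' ⊗ₖ WH d r s) := by
      intro r' s'
      simp only [← Finset.sum_smul]
      congr 1
      have hterm : ∀ k l : ZMod d,
          c i r s * eC d (r * l - k * s) * (c i r' s' * eC d (r' * l - k * s'))
          = (c i r s * c i r' s') * (eC d (k * (-(s + s'))) * eC d (l * (r + r'))) := by
        intro k l
        rw [mul_mul_mul_comm, ← eC_add, ← eC_add]
        congr 2
        ring
      simp only [hterm]
      simp only [← Finset.mul_sum]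
      simp only [← Finset.sum_mul]
      rw [char_sum, char_sum]
      by_cases h1 : r' = -r <;> by_cases h2 : s' = -s
      · rw [if_pos (show -(s + s') = 0 by rw [h2]; ring),
          if_pos (show r + r' = 0 by rw [h1]; ring), if_pos ⟨h1, h2⟩]
        ring
      · rw [if_neg (show ¬-(s + s') = 0 from fun hh => h2 (by linear_combination -hh)),
          if_neg (show ¬(r' = -r ∧ s' = -s) from fun hh => h2 hh.2)]
        ring
      · rw [if_neg (show ¬(r + r') = 0 from fun hh => h1 (by linear_combination hh)),
          if_neg (show ¬(r' = -r ∧ s' = -s) from fun hh => h1 hh.1)]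
        ring
      · rw [if_neg (show ¬(r + r') = 0 from fun hh => h1 (by linear_combination hh)),
          if_neg (show ¬(r' = -r ∧ s' = -s) from fun hh => h1 hh.1)]
        ring
    rw [Finset.sum_congr rfl fun r' (_ : r' ∈ Finset.univ) =>
      Finset.sum_congr rfl fun s' _ => inner r' s']
    rw [Finset.sum_eq_single (-r)]
    · rw [Finset.sum_eq_single (-s)]
      · rw [if_pos ⟨rfl, rfl⟩]
      · intro s' _ hs'
        rw [if_neg (fun h => hs' h.2), zero_smul]
      · exact fun h => absurd (Finset.mem_univ _) h
    · intro r' _ hr'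
      apply Finset.sum_eq_zero
      intro s' _
      rw [if_neg (fun h => hr' h.1), zero_smul]
    · exact fun h => absurd (Finset.mem_univ _) h
  -- Step 4: coefficient sum over i
  have coeff : ∀ r s : ZMod d, (∑ i : ZMod d, c i r s * c i (-r) (-s))
      = (a * a) * d + if r = 0 ∧ s = 0 then ((a + κ) * (a + κ) * d - (a * a) * d) else 0 := by
    intro r s
    by_cases h : r = 0 ∧ s = 0
    · obtain ⟨hr, hs⟩ := h
      subst hr; subst hs
      rw [if_pos ⟨rfl, rfl⟩]
      have hcv : ∀ i : ZMod d, c i 0 0 = a + κ := by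
        intro i
        simp only [hc]
        rw [h0 i]
        simp
      simp only [neg_zero, hcv]
      rw [Finset.sum_const, Finset.card_univ, ZMod.card, nsmul_eq_mul]
      ring
    · rw [if_neg h, add_zero]
      have hite2 : ¬(-r = 0 ∧ -s = 0) := by
        intro hh
        exact h ⟨neg_eq_zero.mp hh.1, neg_eq_zero.mp hh.2⟩
      have hterm : ∀ i : ZMod d, c i r s * c i (-r) (-s)
          = (a * a) * (Complex.normSq (p i r s) : ℂ) := by
        intro i
        simp only [hc]
        rw [if_neg h, if_neg hite2, add_zero, add_zero, ← hconj i r s, mul_mul_mul_comm,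
          Complex.mul_conj]
      rw [Finset.sum_congr rfl fun i _ => hterm i, ← Finset.mul_sum]
      congr 1
      have hn := hnorm r s
      simp only [Complex.sq_norm] at hn
      exact_mod_cast hn
  -- Step 5: assemble
  have hsum1 : ∑ i : ZMod d, ∑ k : ZMod d, ∑ l : ZMod d,
      (WH d k l * P i * (WH d k l)⁻¹) ⊗ₖ (WH d k l * P i * (WH d k l)⁻¹)
      = ∑ r : ZMod d, ∑ s : ZMod d,
          (((d : ℂ) * d) * (∑ i : ZMod d, c i r s * c i (-r) (-s))) •
            (WH d (-r) (-s) ⊗ₖ WH d r s) := by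
    rw [Finset.sum_congr rfl fun i (_ : i ∈ Finset.univ) => step i, sum_swap3 d]
    refine Finset.sum_congr rfl fun r _ => Finset.sum_congr rfl fun s _ => ?_
    rw [← Finset.sum_smul, ← Finset.mul_sum]
  have hterm2 : ∀ r s : ZMod d,
      (((d : ℂ) * d) * (∑ i : ZMod d, c i r s * c i (-r) (-s))) •
          (WH d (-r) (-s) ⊗ₖ WH d r s)
      = (((d : ℂ) * d) * ((a * a) * d)) • (WH d (-r) (-s) ⊗ₖ WH d r s)
        + (if r = 0 ∧ s = 0 then
            (((d : ℂ) * d) * ((a + κ) * (a + κ) * d - (a * a) * d)) else 0) •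
          (WH d (-r) (-s) ⊗ₖ WH d r s) := by
    intro r s
    rw [coeff r s, ← add_smul]
    congr 1
    split_ifs <;> ring
  have hsum2 : ∑ r : ZMod d, ∑ s : ZMod d,
      (((d : ℂ) * d) * (∑ i : ZMod d, c i r s * c i (-r) (-s))) •
        (WH d (-r) (-s) ⊗ₖ WH d r s)
      = (((d : ℂ) * d) * ((a * a) * d)) • ((d : ℂ) • SWAPmat d)
        + (((d : ℂ) * d) * ((a + κ) * (a + κ) * d - (a * a) * d)) •
          ((1 : Matrix (ZMod d) (ZMod d) ℂ) ⊗ₖ (1 : Matrix (ZMod d) (ZMod d) ℂ)) := by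
    rw [Finset.sum_congr rfl fun r (_ : r ∈ Finset.univ) =>
      Finset.sum_congr rfl fun s _ => hterm2 r s]
    simp only [Finset.sum_add_distrib]
    congr 1
    · simp only [← Finset.smul_sum]
      rw [sum_WH_kron' d hd]
    · rw [Finset.sum_eq_single (0 : ZMod d)]
      · rw [Finset.sum_eq_single (0 : ZMod d)]
        · rw [if_pos (show (0:ZMod d) = 0 ∧ (0:ZMod d) = 0 from ⟨rfl, rfl⟩), neg_zero, WH_zero_zero]
        · intro s _ hs
          rw [if_neg (fun hh => hs hh.2), zero_smul]
        · exact fun h => absurd (Finset.mem_univ _) h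
      · intro r _ hr
        apply Finset.sum_eq_zero
        intro s _
        rw [if_neg (fun hh => hr hh.1), zero_smul]
      · exact fun h => absurd (Finset.mem_univ _) h
  rw [hsum1, hsum2]
  match_scalars
  · -- coefficient of SWAP
    rw [ha, ← hsq]
    field_simp
  · -- coefficient of 1 ⊗ 1
    rw [ha, hκ, ← hsq]
    field_simp
    linear_combination hsq
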